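/- Let K ⊆ ℝ^d be a convex set of diameter at most D > 0, T ≥ 1, η > 0, and let ℓ₁, …, ℓ_T : ℝ^d → ℝ be differentiable convex functions (ℓ_t(y) ≥ ℓ_t(x) + ⟨∇ℓ_t(x), y − x⟩ for x, y ∈ K). Set ε := 2/D². Let μ̂₁, …, μ̂_{T+1} ∈ K and ν₁, …, ν_{T+1} ∈ K; write ∇_t := ∇ℓ_t(μ̂_t), G₀ := ε·I_d, G_t := G_{t−1} + ∇_t∇_tᵀ, H_t := G_t^{1/2} (the unique positive semidefinite square root of G_t), and μ̂_{temp,t+1} := μ̂_t − η·H_t⁻¹∇_t. Assume for every 1 ≤ t ≤ T the ADJUST contraction (μ̂_{t+1} − ν_{t+1})ᵀ H_t (μ̂_{t+1} − ν_{t+1}) ≤ (μ̂_{temp,t+1} − ν_t)ᵀ H_t (μ̂_{temp,t+1} − ν_t). Then Σ_{t=1}^{T} (ℓ_t(μ̂_t) − ℓ_t(ν_t)) ≤ √2·D/(2η) + (η/2)·(Tr(G_T·H_T⁻¹) + Tr(H_T)) + (1/(2η))·Σ_{t=1}^{T} (μ̂_t − ν_t)ᵀ (H_t − H_{t−1}) (μ̂_t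 − ν_t). -/

import Mathlib

open Matrix RealInnerProductSpace Finset

section AuxDadagrad

variable {n : Type*} [Fintype n] [DecidableEq n]

private lemma aux_trace_nonneg' {A : Matrix n n ℝ} (hA : A.PosSemidef) : 0 ≤ A.trace := by
  rw [Matrix.trace]
  refine Finset.sum_nonneg fun i _ => ?_
  have h := hA.dotProduct_mulVec_nonneg (Pi.single i 1)
  simpa [dotProduct, Matrix.mulVec, Pi.single_apply, Finset.sum_ite_eq] using h

private lemma aux_vecMulVec_psd (v : n → ℝ) : (Matrix.vecMulVec v v).PosSemidef := by
  rw [Matrix.vecMulVec_eq (Fin 1)]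
  have h : Matrix.replicateCol (Fin 1) v = (Matrix.replicateRow (Fin 1) v)ᴴ := by
    rw [Matrix.conjTranspose_replicateRow]; simp
  rw [h]
  exact Matrix.posSemidef_conjTranspose_mul_self _

private lemma aux_posDef_of_sq {A G : Matrix n n ℝ} (hA : A.PosSemidef) (hsq : A * A = G)
    (hG : G.PosDef) : A.PosDef := by
  refine Matrix.PosDef.of_dotProduct_mulVec_pos hA.1 fun x hx => ?_
  rcases (hA.dotProduct_mulVec_nonneg x).lt_or_eq with h | h
  · exact h
  · exfalso
    have h0 : A *ᵥ x = 0 := (hA.dotProduct_mulVec_zero_iff x).1 h.symm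
    have hGx : G *ᵥ x = 0 := by
      rw [← hsq, ← Matrix.mulVec_mulVec, h0, Matrix.mulVec_zero]
    have := hG.dotProduct_mulVec_pos hx
    rw [hGx, dotProduct_zero] at this
    exact lt_irrefl 0 this

private lemma aux_telescope (f : ℕ → ℝ) (n : ℕ) :
    ∑ t ∈ Icc 1 n, (f t - f (t+1)) = f 1 - f (n+1) := by
  induction n with
  | zero => simp
  | succ k ih =>
    rw [Finset.sum_Icc_succ_top (by omega : 1 ≤ k + 1), ih]; ring

private lemma aux_telescope' (f : ℕ → ℝ) (n : ℕ) :
    ∑ t ∈ Icc 1 n, (f t - f (t-1)) = f n - f 0 := by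
  induction n with
  | zero => simp
  | succ k ih =>
    rw [Finset.sum_Icc_succ_top (by omega : 1 ≤ k + 1), ih]
    simp

private lemma aux_expand {A : Matrix n n ℝ} (hAT : Aᵀ = A) (hAinv : A * A⁻¹ = 1)
    (η : ℝ) (w v : n → ℝ) :
    (w - η • (A⁻¹ *ᵥ v)) ⬝ᵥ A *ᵥ (w - η • (A⁻¹ *ᵥ v)) =
      w ⬝ᵥ A *ᵥ w - 2*η*(v ⬝ᵥ w) + η^2 * (v ⬝ᵥ A⁻¹ *ᵥ v) := by
  have hAu : A *ᵥ (η • (A⁻¹ *ᵥ v)) = η • v := by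
    rw [Matrix.mulVec_smul, Matrix.mulVec_mulVec, hAinv, Matrix.one_mulVec]
  have hcross : (A⁻¹ *ᵥ v) ⬝ᵥ (A *ᵥ w) = v ⬝ᵥ w := by
    rw [Matrix.dotProduct_mulVec, ← Matrix.mulVec_transpose, hAT, Matrix.mulVec_mulVec,
      hAinv, Matrix.one_mulVec]
  have hwv : w ⬝ᵥ v = v ⬝ᵥ w := dotProduct_comm w v
  have hvv : (A⁻¹ *ᵥ v) ⬝ᵥ v = v ⬝ᵥ (A⁻¹ *ᵥ v) := dotProduct_comm _ _
  rw [Matrix.mulVec_sub, hAu, dotProduct_sub, sub_dotProduct,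
    sub_dotProduct, smul_dotProduct, smul_dotProduct,
    dotProduct_smul, dotProduct_smul, hcross, hwv, hvv]
  simp only [smul_eq_mul]
  ring

private lemma aux_key {A B : Matrix n n ℝ} (v : n → ℝ) (hA : A.PosDef) (hB : B.PosSemidef)
    (h : A * A = B * B + Matrix.vecMulVec v v) :
    v ⬝ᵥ A⁻¹ *ᵥ v ≤ 2 * (A.trace - B.trace) := by
  have hdet : IsUnit A.det := (Matrix.isUnit_iff_isUnit_det A).1 hA.isUnit
  have hAA : A * A⁻¹ = 1 := Matrix.mul_nonsing_inv A hdet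
  have hAA' : A⁻¹ * A = 1 := Matrix.nonsing_inv_mul A hdet
  have hAinvT : A⁻¹ᵀ = A⁻¹ := by
    rw [← Matrix.conjTranspose_eq_transpose_of_trivial]; exact hA.inv.1
  have hid : Matrix.trace (A⁻¹ * Matrix.vecMulVec v v) = v ⬝ᵥ A⁻¹ *ᵥ v := by
    rw [Matrix.vecMulVec_eq (Fin 1), Matrix.trace_mul_comm, Matrix.mul_assoc,
      ← Matrix.replicateRow_vecMul, Matrix.trace_replicateCol_mul_replicateRow, ← Matrix.mulVec_transpose, hAinvT]
  have e1 : v ⬝ᵥ A⁻¹ *ᵥ v = A.trace - (B * B * A⁻¹).trace := by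
    rw [← hid]
    have h2 : A⁻¹ * Matrix.vecMulVec v v = A - A⁻¹ * (B * B) := by
      calc A⁻¹ * Matrix.vecMulVec v v = A⁻¹ * (A * A) - A⁻¹ * (B * B) := by
            rw [← Matrix.mul_sub]; congr 1; rw [h]; exact (add_sub_cancel_left _ _).symm
        _ = A - A⁻¹ * (B * B) := by rw [← Matrix.mul_assoc, hAA', Matrix.one_mul]
    rw [h2, Matrix.trace_sub, Matrix.trace_mul_comm]
  have hherm : (A - B)ᴴ = A - B := by
    rw [Matrix.conjTranspose_sub, hA.1.eq, hB.1.eq]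
  have hpsd : ((A - B) * A⁻¹ * (A - B)).PosSemidef := by
    have := (hA.inv.posSemidef).conjTranspose_mul_mul_same (A - B)
    rwa [hherm] at this
  have htr : 0 ≤ ((A - B) * A⁻¹ * (A - B)).trace := aux_trace_nonneg' hpsd
  have hexp2 : (A - B) * A⁻¹ * (A - B) = (A - B) - (B - B * A⁻¹ * B) := by
    rw [Matrix.sub_mul, hAA, Matrix.sub_mul, Matrix.one_mul, Matrix.mul_sub,
      Matrix.mul_assoc B A⁻¹ A, hAA', Matrix.mul_one]
  have hcyc : (B * A⁻¹ * B).trace = (B * B * A⁻¹).trace := Matrix.trace_mul_cycle B A⁻¹ B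
  rw [hexp2, Matrix.trace_sub, Matrix.trace_sub, Matrix.trace_sub, hcyc] at htr
  linarith

end AuxDadagrad

/-- Dynamic AdaGrad auxiliary lemma (the paper's adaptation of Hazan's Lemma 5.13):
with `ε = 2/D²`, `G₀ = εI`, `G_t = G_{t−1} + ∇_t∇_tᵀ`, `H_t` the unique positive semidefinite
square root of `G_t`, and predictors satisfying the ADJUST contraction in the `H_t`-norm
against the candidates `μ̂_t − ηH_t⁻¹∇_t`, the regret against the advice `ν` is at most
`√2·D/(2η) + (η/2)(Tr(G_T H_T⁻¹) + Tr(H_T)) + (1/(2η)) Σ_t (μ̂_t − ν_t)ᵀ(H_t − H_{t−1})(μ̂_t − ν_t)`. -/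
theorem dadagrad_regret_lemma {d : ℕ}
    (K : Set (EuclideanSpace ℝ (Fin d))) (hK : Convex ℝ K)
    (D : ℝ) (hD : 0 < D) (hdiam : ∀ x ∈ K, ∀ y ∈ K, ‖x - y‖ ≤ D)
    (T : ℕ) (hT : 1 ≤ T) (η : ℝ) (hη : 0 < η)
    (ℓ : ℕ → EuclideanSpace ℝ (Fin d) → ℝ)
    (g : ℕ → EuclideanSpace ℝ (Fin d) → EuclideanSpace ℝ (Fin d))
    (hdiff : ∀ t, ∀ x, HasGradientAt (ℓ t) (g t x) x)
    (hconv : ∀ t ∈ Icc 1 T, ∀ x ∈ K, ∀ y ∈ K, ℓ t x + ⟪g t x, y - x⟫ ≤ ℓ t y)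
    (ε : ℝ) (hε : ε = 2 / D ^ 2)
    (p ν : ℕ → EuclideanSpace ℝ (Fin d))
    (hpK : ∀ t ∈ Icc 1 (T + 1), p t ∈ K) (hνK : ∀ t ∈ Icc 1 (T + 1), ν t ∈ K)
    (Gm H : ℕ → Matrix (Fin d) (Fin d) ℝ)
    (hG0 : Gm 0 = ε • 1)
    (hGrec : ∀ t ∈ Icc 1 T,
      Gm t = Gm (t - 1) + Matrix.vecMulVec (g t (p t) : Fin d → ℝ) (g t (p t) : Fin d → ℝ))
    (hH : ∀ t ≤ T, (H t).PosSemidef ∧ H t * H t = Gm t)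
    (hadj : ∀ t ∈ Icc 1 T,
      (p (t + 1) - ν (t + 1)) ⬝ᵥ (H t).mulVec (p (t + 1) - ν (t + 1)) ≤
      ((p t - η • (EuclideanSpace.equiv (Fin d) ℝ).symm ((H t)⁻¹.mulVec (g t (p t)))) - ν t)
        ⬝ᵥ (H t).mulVec
          ((p t - η • (EuclideanSpace.equiv (Fin d) ℝ).symm ((H t)⁻¹.mulVec (g t (p t))))
            - ν t)) :
    ∑ t ∈ Icc 1 T, (ℓ t (p t) - ℓ t (ν t)) ≤
      Real.sqrt 2 * D / (2 * η) + η / 2 * ((Gm T * (H T)⁻¹).trace + (H T).trace)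
        + 1 / (2 * η) *
          ∑ t ∈ Icc 1 T, (p t - ν t) ⬝ᵥ (H t - H (t - 1)).mulVec (p t - ν t) := by

  have hε0 : 0 < ε := by rw [hε]; positivity
  -- G is positive definite
  have hGpd : ∀ t, t ≤ T → (Gm t).PosDef := by
    intro t
    induction t with
    | zero =>
      intro _
      rw [hG0, Matrix.smul_one_eq_diagonal]
      exact Matrix.posDef_diagonal_iff.mpr fun _ => hε0
    | succ k ih =>
      intro hk
      rw [hGrec (k+1) (mem_Icc.mpr ⟨by omega, hk⟩)]
      simp only [Nat.add_sub_cancel]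
      exact (ih (by omega)).add_posSemidef (aux_vecMulVec_psd _)
  have hHpd : ∀ t, t ≤ T → (H t).PosDef :=
    fun t ht => aux_posDef_of_sq (hH t ht).1 (hH t ht).2 (hGpd t ht)
  have hHdet : ∀ t, t ≤ T → IsUnit (H t).det :=
    fun t ht => (Matrix.isUnit_iff_isUnit_det _).1 (hHpd t ht).isUnit
  have hHT : ∀ t, t ≤ T → (H t)ᵀ = H t := by
    intro t ht
    rw [← Matrix.conjTranspose_eq_transpose_of_trivial]
    exact (hH t ht).1.1
  -- per-step inequality
  have step : ∀ t ∈ Icc 1 T,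
      2*η*((g t (p t)) ⬝ᵥ (p t - ν t)) ≤
        ((p t - ν t) ⬝ᵥ (H (t-1)) *ᵥ (p t - ν t)
          - (p (t+1) - ν (t+1)) ⬝ᵥ (H t) *ᵥ (p (t+1) - ν (t+1)))
        + (p t - ν t) ⬝ᵥ (H t - H (t - 1)) *ᵥ (p t - ν t)
        + η^2 * ((g t (p t)) ⬝ᵥ (H t)⁻¹ *ᵥ (g t (p t))) := by
    intro t ht
    obtain ⟨ht1, ht2⟩ := mem_Icc.mp ht
    have hHsq : H t * (H t)⁻¹ = 1 := Matrix.mul_nonsing_inv _ (hHdet t ht2)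
    have hadj' := hadj t ht
    rw [sub_right_comm] at hadj'
    have h1 : (p (t+1) - ν (t+1)) ⬝ᵥ (H t) *ᵥ (p (t+1) - ν (t+1)) ≤
        (p t - ν t) ⬝ᵥ (H t) *ᵥ (p t - ν t) - 2*η*((g t (p t)) ⬝ᵥ (p t - ν t))
          + η^2 * ((g t (p t)) ⬝ᵥ (H t)⁻¹ *ᵥ (g t (p t))) := by
      simp only [WithLp.ofLp_sub, WithLp.ofLp_smul] at hadj' ⊢
      have e : ((EuclideanSpace.equiv (Fin d) ℝ).symm ((H t)⁻¹ *ᵥ (g t (p t)))).ofLp =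
          (H t)⁻¹ *ᵥ (g t (p t)) := rfl
      rw [e, sub_right_comm (p t).ofLp (η • ((H t)⁻¹ *ᵥ (g t (p t)).ofLp)) (ν t).ofLp] at hadj'
      exact hadj'.trans_eq (aux_expand (hHT t ht2) hHsq η (p t - ν t) (g t (p t)))
    have hsplit : (p t - ν t) ⬝ᵥ (H t - H (t - 1)) *ᵥ (p t - ν t) =
        (p t - ν t) ⬝ᵥ (H t) *ᵥ (p t - ν t)
          - (p t - ν t) ⬝ᵥ (H (t-1)) *ᵥ (p t - ν t) := by
      rw [Matrix.sub_mulVec, dotProduct_sub]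
    linarith
  -- telescoping sums
  have htel : ∑ t ∈ Icc 1 T,
      ((p t - ν t) ⬝ᵥ (H (t-1)) *ᵥ (p t - ν t)
        - (p (t+1) - ν (t+1)) ⬝ᵥ (H t) *ᵥ (p (t+1) - ν (t+1)))
      = (p 1 - ν 1) ⬝ᵥ (H 0) *ᵥ (p 1 - ν 1)
        - (p (T+1) - ν (T+1)) ⬝ᵥ (H T) *ᵥ (p (T+1) - ν (T+1)) :=
    aux_telescope (fun s => (p s - ν s) ⬝ᵥ (H (s-1)) *ᵥ (p s - ν s)) T
  have hsum2 := Finset.sum_le_sum step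
  rw [Finset.sum_add_distrib, Finset.sum_add_distrib, htel, ← Finset.mul_sum,
    ← Finset.mul_sum] at hsum2
  -- the gradient-energy sum
  have hγ : ∀ t ∈ Icc 1 T,
      (g t (p t)) ⬝ᵥ (H t)⁻¹ *ᵥ (g t (p t)) ≤ 2 * ((H t).trace - (H (t-1)).trace) := by
    intro t ht
    obtain ⟨ht1, ht2⟩ := mem_Icc.mp ht
    refine aux_key _ (hHpd t ht2) (hH (t-1) (by omega)).1 ?_
    rw [(hH t ht2).2, (hH (t-1) (by omega)).2]
    exact hGrec t ht
  have htel2 : ∑ t ∈ Icc 1 T, ((H t).trace - (H (t-1)).trace) = (H T).trace - (H 0).trace :=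
    aux_telescope' (fun s => (H s).trace) T
  have hγsum : ∑ t ∈ Icc 1 T, ((g t (p t)) ⬝ᵥ (H t)⁻¹ *ᵥ (g t (p t))) ≤ 2 * (H T).trace := by
    have h0 := aux_trace_nonneg' (hH 0 (Nat.zero_le T)).1
    calc ∑ t ∈ Icc 1 T, ((g t (p t)) ⬝ᵥ (H t)⁻¹ *ᵥ (g t (p t)))
        ≤ ∑ t ∈ Icc 1 T, (2 * ((H t).trace - (H (t-1)).trace)) := Finset.sum_le_sum hγ
      _ = 2 * ((H T).trace - (H 0).trace) := by rw [← Finset.mul_sum, htel2]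
      _ ≤ 2 * (H T).trace := by linarith
  -- last term is nonnegative
  have hlast : 0 ≤ (p (T+1) - ν (T+1)) ⬝ᵥ (H T) *ᵥ (p (T+1) - ν (T+1)) := by
    have h := (hH T le_rfl).1.dotProduct_mulVec_nonneg (p (T+1) - ν (T+1))
    simpa using h
  -- first term bound
  have hH0eq : H 0 = Real.sqrt ε • 1 := by
    have hpsd1 : (Real.sqrt ε • (1 : Matrix (Fin d) (Fin d) ℝ)).PosSemidef := by
      rw [Matrix.smul_one_eq_diagonal]
      exact Matrix.PosSemidef.diagonal fun i => Real.sqrt_nonneg ε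
    open scoped MatrixOrder in
    apply (CFC.sq_eq_sq_iff _ _ (hH 0 (Nat.zero_le T)).1.nonneg hpsd1.nonneg).1
    rw [pow_two, pow_two, (hH 0 (Nat.zero_le T)).2, hG0, smul_mul_assoc, mul_smul_comm,
      smul_smul, Real.mul_self_sqrt hε0.le, Matrix.one_mul]
  have hf1 : (p 1 - ν 1) ⬝ᵥ (H 0) *ᵥ (p 1 - ν 1) ≤ Real.sqrt 2 * D := by
    have hmem1 : (1:ℕ) ∈ Icc 1 (T+1) := mem_Icc.mpr ⟨le_rfl, by omega⟩
    have hnorm : ‖p 1 - ν 1‖ ≤ D := hdiam _ (hpK 1 hmem1) _ (hνK 1 hmem1)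
    have hdot : (p 1 - ν 1) ⬝ᵥ (p 1 - ν 1) = ‖p 1 - ν 1‖^2 := by
      rw [EuclideanSpace.norm_eq, Real.sq_sqrt (by positivity)]
      simp [dotProduct, sq]
    have h2 : Real.sqrt ε = Real.sqrt 2 / D := by
      rw [hε, Real.sqrt_div (by norm_num : (0:ℝ) ≤ 2), Real.sqrt_sq hD.le]
    rw [hH0eq, Matrix.smul_mulVec, Matrix.one_mulVec, dotProduct_smul,
      smul_eq_mul, hdot, h2]
    have h1 : ‖p 1 - ν 1‖^2 ≤ D^2 := pow_le_pow_left₀ (norm_nonneg _) hnorm 2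
    calc Real.sqrt 2 / D * ‖p 1 - ν 1‖^2 ≤ Real.sqrt 2 / D * D^2 :=
          mul_le_mul_of_nonneg_left h1 (by positivity)
      _ = Real.sqrt 2 * D := by field_simp
  -- convexity: regret per step
  have hinner : ∀ x y : EuclideanSpace ℝ (Fin d), (⟪x, y⟫ : ℝ) = x ⬝ᵥ y := fun x y => by
    simp [PiLp.inner_apply, RCLike.inner_apply, starRingEnd_apply, dotProduct, mul_comm]
  have hreg : ∀ t ∈ Icc 1 T, ℓ t (p t) - ℓ t (ν t) ≤ (g t (p t)) ⬝ᵥ (p t - ν t) := by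
    intro t ht
    obtain ⟨ht1, ht2⟩ := mem_Icc.mp ht
    have hmem : t ∈ Icc 1 (T+1) := mem_Icc.mpr ⟨ht1, by omega⟩
    have h := hconv t ht (p t) (hpK t hmem) (ν t) (hνK t hmem)
    have hip : (⟪g t (p t), ν t - p t⟫ : ℝ) = -((g t (p t)) ⬝ᵥ (p t - ν t)) := by
      rw [show ν t - p t = -(p t - ν t) from (neg_sub _ _).symm, inner_neg_right, hinner, WithLp.ofLp_sub]
    linarith
  have hsum1 : ∑ t ∈ Icc 1 T, (ℓ t (p t) - ℓ t (ν t)) ≤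
      ∑ t ∈ Icc 1 T, ((g t (p t)) ⬝ᵥ (p t - ν t)) := Finset.sum_le_sum hreg
  -- trace identity
  have htrG : (Gm T * (H T)⁻¹).trace = (H T).trace := by
    rw [← (hH T le_rfl).2, Matrix.mul_assoc, Matrix.mul_nonsing_inv _ (hHdet T le_rfl),
      Matrix.mul_one]
  rw [htrG]
  have h2η : (0:ℝ) < 2 * η := by positivity
  have hγsum' : η^2 * ∑ t ∈ Icc 1 T, ((g t (p t)) ⬝ᵥ (H t)⁻¹ *ᵥ (g t (p t)))
      ≤ η^2 * (2 * (H T).trace) := mul_le_mul_of_nonneg_left hγsum (sq_nonneg η)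
  calc ∑ t ∈ Icc 1 T, (ℓ t (p t) - ℓ t (ν t))
      ≤ ∑ t ∈ Icc 1 T, ((g t (p t)) ⬝ᵥ (p t - ν t)) := hsum1
    _ ≤ (Real.sqrt 2 * D
          + (∑ t ∈ Icc 1 T, (p t - ν t) ⬝ᵥ (H t - H (t - 1)) *ᵥ (p t - ν t))
          + 2*η^2*(H T).trace) / (2*η) := by
        rw [le_div_iff₀ h2η]
        nlinarith [hsum2, hf1, hlast, hγsum']
    _ = Real.sqrt 2 * D / (2 * η) + η / 2 * ((H T).trace + (H T).trace)
          + 1 / (2 * η) * ∑ t ∈ Icc 1 T, (p t - ν t) ⬝ᵥ (H t - H (t - 1)) *ᵥ (p t - ν t) := by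
        field_simp
        ring
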